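/- arXiv:2601.12612 — 3 statements merged into one kernel-verified Lean document; each statement's English description precedes it below -/
import Mathlib

section
/- For the Lagrange basis polynomials L_j on the nodes {0, 1, ..., m}, the derivative at zero satisfies L'_j(0) = (-1)^(j-1) * C(m,j) / j for each j with 1 ≤ j ≤ m. -/
lemma lagrange_prod_aux (j : ℕ) (hj1 : 1 ≤ j) : ∀ m, j ≤ m →
    ∏ k ∈ (Finset.Icc 1 m).erase j, ((0:ℝ) - (k:ℝ)) / ((j:ℝ) - (k:ℝ))
      = (-1 : ℝ) ^ (j - 1) * (Nat.choose m j : ℝ) := by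
  refine Nat.le_induction ?_ ?_
  · have hset : (Finset.Icc 1 j).erase j = Finset.Icc 1 (j - 1) := by
      ext k; simp only [Finset.mem_erase, Finset.mem_Icc]; omega
    rw [hset, Nat.choose_self]
    have h1 : ∀ k ∈ Finset.Icc 1 (j-1), ((0:ℝ) - (k:ℝ)) / ((j:ℝ) - (k:ℝ))
        = (-1) * ((k:ℝ) / ((j:ℝ) - (k:ℝ))) := by
      intro k _; ring
    rw [Finset.prod_congr rfl h1, Finset.prod_mul_distrib, Finset.prod_const,
      Nat.card_Icc, Finset.prod_div_distrib]
    have h2 : ∏ k ∈ Finset.Icc 1 (j-1), ((j:ℝ) - (k:ℝ))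
        = ∏ k ∈ Finset.Icc 1 (j-1), (k:ℝ) := by
      refine Finset.prod_nbij' (fun k => j - k) (fun k => j - k) ?_ ?_ ?_ ?_ ?_
      · intro a ha; simp only [Finset.mem_Icc] at *; omega
      · intro a ha; simp only [Finset.mem_Icc] at *; omega
      · intro a ha; simp only [Finset.mem_Icc] at *; omega
      · intro a ha; simp only [Finset.mem_Icc] at *; omega
      · intro a ha; simp only [Finset.mem_Icc] at ha
        rw [Nat.cast_sub (by omega)]
    rw [h2]
    have hne : ∏ k ∈ Finset.Icc 1 (j-1), (k:ℝ) ≠ 0 := by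
      refine Finset.prod_ne_zero_iff.2 ?_
      intro k hk; simp only [Finset.mem_Icc] at hk
      exact Nat.cast_ne_zero.2 (by omega)
    simp [div_self hne, Nat.add_sub_cancel]
  · intro m hm ih
    have hmem : m + 1 ∈ (Finset.Icc 1 (m+1)).erase j := by
      simp only [Finset.mem_erase, Finset.mem_Icc]; omega
    have hset : (Finset.Icc 1 (m+1)).erase j
        = insert (m+1) ((Finset.Icc 1 m).erase j) := by
      ext k; simp only [Finset.mem_insert, Finset.mem_erase, Finset.mem_Icc]; omega
    rw [hset, Finset.prod_insert (by simp only [Finset.mem_erase, Finset.mem_Icc]; omega), ih]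
    have hd : ((j:ℝ) - ((m:ℝ)+1)) ≠ 0 := by
      intro h
      have : (j:ℝ) = (m:ℝ)+1 := by linarith
      have : j = m + 1 := by exact_mod_cast this
      omega
    have hchoose : (Nat.choose m j : ℝ) * ((m:ℝ) + 1)
        = (Nat.choose (m+1) j : ℝ) * ((m:ℝ) + 1 - (j:ℝ)) := by
      have := Nat.choose_mul_succ_eq m j
      have h2 : ((m:ℝ) + 1 - (j:ℝ)) = ((m + 1 - j : ℕ) : ℝ) := by
        rw [Nat.cast_sub (by omega)]; push_cast; ring
      rw [h2]
      exact_mod_cast this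
    push_cast
    rw [div_mul_eq_mul_div, div_eq_iff hd]
    linear_combination (-(-1:ℝ)^(j-1)) * hchoose

/-- Lagrange basis derivative at 0: L'_j(0) = (-1)^(j-1) C(m,j)/j for 1 ≤ j ≤ m. -/
theorem lagrange_deriv_at_zero (m j : ℕ) (hm : 1 ≤ m) (hj1 : 1 ≤ j) (hjm : j ≤ m) :
    deriv (fun t : ℝ => ∏ k ∈ (Finset.range (m + 1)).erase j, (t - (k : ℝ)) / ((j : ℝ) - (k : ℝ))) 0
      = (-1 : ℝ) ^ (j - 1) * (Nat.choose m j : ℝ) / (j : ℝ) := by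
  have h0mem : (0:ℕ) ∈ (Finset.range (m + 1)).erase j := by
    simp only [Finset.mem_erase, Finset.mem_range]; omega
  set S := ((Finset.range (m + 1)).erase j).erase 0 with hS
  have hfun : (fun t : ℝ => ∏ k ∈ (Finset.range (m + 1)).erase j, (t - (k : ℝ)) / ((j : ℝ) - (k : ℝ)))
      = fun t : ℝ => ((t - 0) / ((j:ℝ) - 0)) * ∏ k ∈ S, (t - (k : ℝ)) / ((j : ℝ) - (k : ℝ)) := by
    funext t
    rw [← Finset.mul_prod_erase _ _ h0mem]
    norm_num
    exact Or.inl rfl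
  rw [hfun]
  have hg : DifferentiableAt ℝ (fun t : ℝ => ∏ k ∈ S, (t - (k : ℝ)) / ((j : ℝ) - (k : ℝ))) 0 := by
    apply DifferentiableAt.fun_finsetProd
    intro i _
    exact (differentiableAt_id.sub_const _).div_const _
  have hh : DifferentiableAt ℝ (fun t : ℝ => (t - 0) / ((j:ℝ) - 0)) 0 :=
    (differentiableAt_id.sub_const _).div_const _
  rw [deriv_fun_mul hh hg]
  have hdh : deriv (fun t : ℝ => (t - 0) / ((j:ℝ) - 0)) 0 = 1 / (j:ℝ) := by
    simp [deriv_div_const]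
  rw [hdh]
  rw [show ((0:ℝ) - 0) / ((j:ℝ) - 0) = 0 from by norm_num, zero_mul, add_zero]
  have hSset : S = (Finset.Icc 1 m).erase j := by
    ext k
    simp only [hS, Finset.mem_erase, Finset.mem_range, Finset.mem_Icc]
    omega
  rw [hSset, lagrange_prod_aux j hj1 m hjm]
  ring
end

section
/- Fix real numbers 0 < t_1 < t_2 < ... < t_m. For any continuous function f : ℝ^m → ℝ, there exists a sequence of pairs of positive reals (spectra of 2×2 diagonal SPD matrices) whose normalized log-moment vectors (K(t_1), ..., K(t_m)) converge to a finite limit while the true values K'(0) diverge to -∞; hence sup over such spectra of |f(K(t_1),...,K(t_m)) - K'(0)| = ∞. -/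
open Real Filter

/-- Normalized log-moment function of the two-point spectrum {a, b}. -/
noncomputable def twoPtK (a b t : ℝ) : ℝ :=
  Real.log ((1 / 2) * ((a / ((a + b) / 2)) ^ t + (b / ((a + b) / 2)) ^ t))

/-- K'(0) of the two-point spectrum {a, b}. -/
noncomputable def twoPtK' (a b : ℝ) : ℝ :=
  (1 / 2) * (Real.log (a / ((a + b) / 2)) + Real.log (b / ((a + b) / 2)))

lemma twoPtK_eq (x u : ℝ) : twoPtK x (2 - x) u =
    Real.log ((1 / 2) * (x ^ u + (2 - x) ^ u)) := by
  have h : (x + (2 - x)) / 2 = 1 := by ring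
  rw [twoPtK, h, div_one, div_one]

lemma twoPtK'_eq (x : ℝ) : twoPtK' x (2 - x) =
    (1 / 2) * (Real.log x + Real.log (2 - x)) := by
  have h : (x + (2 - x)) / 2 = 1 := by ring
  rw [twoPtK', h, div_one, div_one]

/-- No continuous estimator from finitely many positive log-moments can be
uniformly accurate: there is a sequence of positive two-point spectra whose
log-moment vectors converge, whose K'(0) diverges to -∞, and on which the
estimator's absolute error tends to infinity. -/
theorem no_uniform_continuous_estimator (m : ℕ) (hm : 1 ≤ m)
    (t : Fin m → ℝ) (ht : ∀ j, 0 < t j) (htmono : StrictMono t)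
    (f : (Fin m → ℝ) → ℝ) (hf : Continuous f) :
    ∃ s : ℕ → ℝ × ℝ,
      (∀ i, 0 < (s i).1 ∧ 0 < (s i).2) ∧
      (∃ L : Fin m → ℝ,
        Tendsto (fun i => fun j => twoPtK (s i).1 (s i).2 (t j)) atTop (nhds L)) ∧
      Tendsto (fun i => twoPtK' (s i).1 (s i).2) atTop atBot ∧
      Tendsto (fun i =>
          |f (fun j => twoPtK (s i).1 (s i).2 (t j)) - twoPtK' (s i).1 (s i).2|)
        atTop atTop := by
  set x : ℕ → ℝ := fun i => 1 / ((i : ℝ) + 1) with hxdef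
  have hxpos : ∀ i, 0 < x i := fun i => by positivity
  have hxle : ∀ i, x i ≤ 1 := by
    intro i
    rw [hxdef]
    rw [div_le_one (by positivity)]
    linarith [Nat.cast_nonneg (α := ℝ) i]
  have hx0 : Tendsto x atTop (nhds 0) := tendsto_one_div_add_atTop_nhds_zero_nat
  refine ⟨fun i => (x i, 2 - x i), fun i => ⟨hxpos i, by have := hxle i; simp; linarith⟩,
    ?_, ?_, ?_⟩
  · -- convergence of the log-moment vectors
    refine ⟨fun j => Real.log ((1 / 2) * (2 : ℝ) ^ (t j)), ?_⟩
    rw [tendsto_pi_nhds]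
    intro j
    simp only [twoPtK_eq]
    have hcont : ContinuousAt (fun y : ℝ =>
        Real.log ((1 / 2) * (y ^ (t j) + (2 - y) ^ (t j)))) 0 := by
      have h1 : ContinuousAt (fun y : ℝ => y ^ (t j)) 0 :=
        Real.continuousAt_rpow_const 0 (t j) (Or.inr (ht j).le)
      have h2 : ContinuousAt (fun y : ℝ => (2 - y) ^ (t j)) 0 :=
        ContinuousAt.rpow_const (continuousAt_const.sub continuousAt_id) (Or.inl (by norm_num))
      refine ContinuousAt.log (continuousAt_const.mul (h1.add h2)) ?_
      have : (0 : ℝ) ^ (t j) = 0 := Real.zero_rpow (ne_of_gt (ht j))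
      simp only [this, sub_zero, zero_add]
      positivity
    have := hcont.tendsto.comp hx0
    simpa [Function.comp_def, Real.zero_rpow (ne_of_gt (ht j))] using this
  · -- K'(0) → -∞
    simp only [twoPtK'_eq]
    have hlogx : Tendsto (fun i => Real.log (x i)) atTop atBot := by
      refine Real.tendsto_log_nhdsNE_zero.comp ?_
      refine tendsto_nhdsWithin_of_tendsto_nhds_of_eventually_within _ hx0 ?_
      exact Eventually.of_forall fun i => ne_of_gt (hxpos i)
    have hlog2 : Tendsto (fun i => Real.log (2 - x i)) atTop (nhds (Real.log 2)) := by
      have : ContinuousAt (fun y : ℝ => Real.log (2 - y)) 0 :=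
        ContinuousAt.log (continuousAt_const.sub continuousAt_id) (by norm_num)
      simpa [Function.comp_def] using this.tendsto.comp hx0
    have hsum : Tendsto (fun i => Real.log (x i) + Real.log (2 - x i)) atTop atBot :=
      hlogx.atBot_add hlog2
    exact hsum.const_mul_atBot (by norm_num)
  · -- |f(K) - K'| → ∞
    have hK' : Tendsto (fun i => twoPtK' (x i) (2 - x i)) atTop atBot := by
      simp only [twoPtK'_eq]
      have hlogx : Tendsto (fun i => Real.log (x i)) atTop atBot := by
        refine Real.tendsto_log_nhdsNE_zero.comp ?_
        refine tendsto_nhdsWithin_of_tendsto_nhds_of_eventually_within _ hx0 ?_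
        exact Eventually.of_forall fun i => ne_of_gt (hxpos i)
      have hlog2 : Tendsto (fun i => Real.log (2 - x i)) atTop (nhds (Real.log 2)) := by
        have : ContinuousAt (fun y : ℝ => Real.log (2 - y)) 0 :=
          ContinuousAt.log (continuousAt_const.sub continuousAt_id) (by norm_num)
        simpa [Function.comp_def] using this.tendsto.comp hx0
      exact (hlogx.atBot_add hlog2).const_mul_atBot (by norm_num)
    have hKvec : Tendsto (fun i => fun j => twoPtK (x i) (2 - x i) (t j)) atTop
        (nhds (fun j => Real.log ((1 / 2) * (2 : ℝ) ^ (t j)))) := by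
      rw [tendsto_pi_nhds]
      intro j
      simp only [twoPtK_eq]
      have hcont : ContinuousAt (fun y : ℝ =>
          Real.log ((1 / 2) * (y ^ (t j) + (2 - y) ^ (t j)))) 0 := by
        have h1 : ContinuousAt (fun y : ℝ => y ^ (t j)) 0 :=
          Real.continuousAt_rpow_const 0 (t j) (Or.inr (ht j).le)
        have h2 : ContinuousAt (fun y : ℝ => (2 - y) ^ (t j)) 0 :=
          ContinuousAt.rpow_const (continuousAt_const.sub continuousAt_id) (Or.inl (by norm_num))
        refine ContinuousAt.log (continuousAt_const.mul (h1.add h2)) ?_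
        have : (0 : ℝ) ^ (t j) = 0 := Real.zero_rpow (ne_of_gt (ht j))
        simp only [this, sub_zero, zero_add]
        positivity
      have := hcont.tendsto.comp hx0
      simpa [Function.comp_def, Real.zero_rpow (ne_of_gt (ht j))] using this
    have hfK : Tendsto (fun i => f (fun j => twoPtK (x i) (2 - x i) (t j))) atTop
        (nhds (f (fun j => Real.log ((1 / 2) * (2 : ℝ) ^ (t j))))) :=
      (hf.tendsto _).comp hKvec
    have hdiff : Tendsto (fun i =>
        f (fun j => twoPtK (x i) (2 - x i) (t j)) - twoPtK' (x i) (2 - x i)) atTop atTop := by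
      have : Tendsto (fun i => -twoPtK' (x i) (2 - x i)) atTop atTop :=
        tendsto_neg_atBot_atTop.comp hK'
      simpa [sub_eq_add_neg] using hfK.add_atTop this
    exact tendsto_abs_atTop_atTop.comp hdiff
end

section
/- Maclaurin's inequality: for positive reals x_1,...,x_n and 1 ≤ k ≤ n, the normalized symmetric means satisfy E_k^(1/k) ≥ E_{k+1}^(1/(k+1)) for k < n; in particular the geometric mean (∏ x_i)^(1/n) = E_n^(1/n) ≤ E_k^(1/k) for every k. -/
open Real Finset

/-- Normalized elementary symmetric mean E_k = e_k(x)/C(n,k). -/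
noncomputable def symMean (n : ℕ) (x : Fin n → ℝ) (k : ℕ) : ℝ :=
  (∑ S ∈ (Finset.univ : Finset (Fin n)).powersetCard k, ∏ i ∈ S, x i) / (n.choose k : ℝ)

namespace MaclaurinAux

open Polynomial

/-- Normalized symmetric mean of a multiset. -/
noncomputable def E (s : Multiset ℝ) (k : ℕ) : ℝ :=
  s.esymm k / ((Multiset.card s).choose k : ℝ)

lemma mprod_pos {s : Multiset ℝ} (h : ∀ y ∈ s, 0 < y) : 0 < s.prod := by
  induction s using Multiset.induction with
  | empty => simp
  | cons a s ih =>
    rw [Multiset.prod_cons]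
    exact mul_pos (h a (Multiset.mem_cons_self a s))
      (ih fun y hy => h y (Multiset.mem_cons_of_mem hy))

lemma msum_pos {s : Multiset ℝ} (h : ∀ y ∈ s, 0 < y) (h0 : s ≠ 0) : 0 < s.sum := by
  induction s using Multiset.induction with
  | empty => simp at h0
  | cons a s ih =>
    rw [Multiset.sum_cons]
    rcases eq_or_ne s 0 with rfl | hs
    · simpa using h a (Multiset.mem_cons_self a 0)
    · exact add_pos (h a (Multiset.mem_cons_self a s))
        (ih (fun y hy => h y (Multiset.mem_cons_of_mem hy)) hs)

lemma esymm_pos {s : Multiset ℝ} (h : ∀ y ∈ s, 0 < y) {k : ℕ} (hk : k ≤ Multiset.card s) :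
    0 < s.esymm k := by
  rw [Multiset.esymm]
  apply msum_pos
  · intro z hz
    obtain ⟨t, ht, rfl⟩ := Multiset.mem_map.1 hz
    exact mprod_pos fun y hy => h y (Multiset.mem_of_le (Multiset.mem_powersetCard.1 ht).1 hy)
  · rw [Ne, Multiset.map_eq_zero, ← Multiset.card_eq_zero, Multiset.card_powersetCard]
    exact (Nat.choose_pos hk).ne'

lemma E_pos {s : Multiset ℝ} (h : ∀ y ∈ s, 0 < y) {k : ℕ} (hk : k ≤ Multiset.card s) :
    0 < E s k :=
  div_pos (esymm_pos h hk) (by exact_mod_cast Nat.choose_pos hk)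

lemma exists_index (s : Multiset ℝ) :
    ∃ (m : ℕ) (x : Fin m → ℝ), (Finset.univ.val.map x) = s ∧ m = Multiset.card s := by
  refine ⟨s.toList.length, s.toList.get, ?_, by simp⟩
  have h0 : (Finset.univ.val : Multiset (Fin s.toList.length)) = ↑(List.finRange s.toList.length) := by
    simp [Fin.univ_def]
  rw [h0, Multiset.map_coe, ← List.ofFn_eq_map, List.ofFn_get, Multiset.coe_toList]


lemma sign_lemma (s : Multiset ℝ) (hs : ∀ r ∈ s, 0 < r) {y : ℝ} (hy : y ≤ 0) :
    0 < (-1 : ℝ) ^ (Multiset.card s) * ((s.map fun r => X - C r).prod.eval y) ∧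
    0 ≤ (-1 : ℝ) ^ (Multiset.card s - 1) *
      ((derivative (s.map fun r => X - C r).prod).eval y) := by
  induction s using Multiset.induction with
  | empty => simp
  | cons a s ih =>
    have ha : 0 < a := hs a (Multiset.mem_cons_self a s)
    have hay : 0 < a - y := by linarith
    obtain ⟨h1, h2⟩ := ih (fun r hr => hs r (Multiset.mem_cons_of_mem hr))
    rw [Multiset.map_cons, Multiset.prod_cons, Multiset.card_cons]
    constructor
    · rw [pow_succ, eval_mul, eval_sub, eval_X, eval_C]
      nlinarith
    · rw [Nat.add_sub_cancel, derivative_mul, derivative_sub, derivative_X, derivative_C,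
        sub_zero, one_mul, eval_add, eval_mul, eval_sub, eval_X, eval_C]
      rcases Nat.eq_zero_or_pos (Multiset.card s) with h0 | h0
      · have hs0 : s = 0 := Multiset.card_eq_zero.1 h0
        subst hs0
        simp only [Multiset.map_zero, Multiset.prod_zero, derivative_one, eval_zero,
          eval_one, mul_zero, add_zero, Multiset.card_zero, pow_zero, one_mul]
        norm_num
      · obtain ⟨m, hm⟩ : ∃ m, Multiset.card s = m + 1 := ⟨Multiset.card s - 1, by omega⟩
        rw [hm, pow_succ] at h1
        rw [hm, Nat.add_sub_cancel] at h2
        rw [hm, pow_succ]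
        nlinarith

lemma deriv_sign (s : Multiset ℝ) (hs : ∀ r ∈ s, 0 < r) (h0 : s ≠ 0) {y : ℝ} (hy : y ≤ 0) :
    (derivative (s.map fun r => X - C r).prod).eval y ≠ 0 := by
  obtain ⟨a, ha⟩ := Multiset.exists_mem_of_ne_zero h0
  obtain ⟨t, rfl⟩ := Multiset.exists_cons_of_mem ha
  have hat : 0 < a := hs a (Multiset.mem_cons_self a t)
  have hay : 0 < a - y := by linarith
  obtain ⟨h1, h2⟩ := sign_lemma t (fun r hr => hs r (Multiset.mem_cons_of_mem hr)) hy
  have key : 0 < (-1 : ℝ) ^ (Multiset.card t) *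
      ((derivative ((a ::ₘ t).map fun r => X - C r).prod).eval y) := by
    rw [Multiset.map_cons, Multiset.prod_cons, derivative_mul, derivative_sub, derivative_X,
      derivative_C, sub_zero, one_mul, eval_add, eval_mul, eval_sub, eval_X, eval_C]
    rcases Nat.eq_zero_or_pos (Multiset.card t) with h0 | h0
    · have ht0 : t = 0 := Multiset.card_eq_zero.1 h0
      subst ht0
      simp only [Multiset.map_zero, Multiset.prod_zero, derivative_one, eval_zero,
        eval_one, mul_zero, add_zero, Multiset.card_zero, pow_zero, one_mul]
      norm_num
    · obtain ⟨m, hm⟩ : ∃ m, Multiset.card t = m + 1 := ⟨Multiset.card t - 1, by omega⟩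
      rw [hm, pow_succ] at h1
      rw [hm, Nat.add_sub_cancel] at h2
      rw [hm, pow_succ]
      nlinarith
  intro h
  rw [h, mul_zero] at key
  exact lt_irrefl 0 key


lemma deriv_step (s : Multiset ℝ) (hpos : ∀ y ∈ s, 0 < y) (hn : 2 ≤ Multiset.card s) :
    ∃ t : Multiset ℝ, (∀ y ∈ t, 0 < y) ∧ Multiset.card t = Multiset.card s - 1 ∧
      ∀ j, j ≤ Multiset.card s - 1 → E t j = E s j := by
  set n := Multiset.card s with hns
  set P : Polynomial ℝ := (s.map fun r => X - C r).prod with hPdef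
  have hroots : P.roots = s := roots_multiset_prod_X_sub_C s
  have hdeg : P.natDegree = n := by
    rw [hPdef, natDegree_multiset_prod_X_sub_C_eq_card]
  have hmonic : P.Monic := monic_multiset_prod_of_monic _ _ fun a _ => monic_X_sub_C a
  set Q := derivative P with hQdef
  have hlt : Q.natDegree < n := by
    rw [hQdef, ← hdeg]
    exact Polynomial.natDegree_derivative_lt (by rw [hdeg]; omega)
  have hQdeg_le : Q.natDegree ≤ n - 1 := by omega
  have hQcoeff : Q.coeff (n - 1) = (n : ℝ) := by
    rw [hQdef, Polynomial.coeff_derivative]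
    have h1 : n - 1 + 1 = n := by omega
    rw [h1]
    have h2 : P.coeff n = 1 := by rw [← hdeg]; exact hmonic.coeff_natDegree
    rw [h2, one_mul, Nat.cast_sub (by omega : 1 ≤ n)]
    ring
  have hQne : Q ≠ 0 := by
    intro h
    rw [h, Polynomial.coeff_zero] at hQcoeff
    have hn0 : (n : ℝ) ≠ 0 := by exact_mod_cast (show n ≠ 0 by omega)
    exact hn0 hQcoeff.symm
  have hcard_le : Multiset.card Q.roots ≤ n - 1 := le_trans (Polynomial.card_roots' Q) hQdeg_le
  have hcard_ge : n - 1 ≤ Multiset.card Q.roots := by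
    have := Polynomial.card_roots_le_derivative P
    rw [hroots, ← hns, ← hQdef] at this
    omega
  have hcard : Multiset.card Q.roots = n - 1 := le_antisymm hcard_le hcard_ge
  have hQdeg : Q.natDegree = n - 1 :=
    le_antisymm hQdeg_le (le_trans hcard_ge (Polynomial.card_roots' Q))
  have hlead : Q.leadingCoeff = (n : ℝ) := by
    rw [Polynomial.leadingCoeff, hQdeg, hQcoeff]
  refine ⟨Q.roots, ?_, hcard, ?_⟩
  · intro y hy
    by_contra hle
    push_neg at hle
    exact deriv_sign s hpos
      (by intro h0; rw [h0, Multiset.card_zero] at hns; omega) hle ((mem_roots hQne).1 hy)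
  · intro j hj
    have hesymm : Q.roots.esymm j = (((n : ℝ) - j) / n) * s.esymm j := by
      have hA : Q.coeff (n - 1 - j) = (n : ℝ) * ((-1) ^ j * Q.roots.esymm j) := by
        have h := Polynomial.coeff_eq_esymm_roots_of_card
          (by rw [hcard, hQdeg] : Multiset.card Q.roots = Q.natDegree)
          (by omega : n - 1 - j ≤ Q.natDegree)
        rw [hQdeg] at h
        have h1 : n - 1 - (n - 1 - j) = j := by omega
        rw [h1, hlead] at h
        rw [h, mul_assoc]
      have hB : Q.coeff (n - 1 - j) = ((n : ℝ) - j) * ((-1) ^ j * s.esymm j) := by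
        rw [hQdef, Polynomial.coeff_derivative, hPdef,
          Multiset.prod_X_sub_C_coeff s (by omega : n - 1 - j + 1 ≤ Multiset.card s)]
        have h2 : Multiset.card s - (n - 1 - j + 1) = j := by omega
        rw [h2]
        have h3 : ((n - 1 - j : ℕ) : ℝ) + 1 = (n : ℝ) - j := by
          rw [Nat.cast_sub (by omega : j ≤ n - 1), Nat.cast_sub (by omega : 1 ≤ n)]
          ring
        rw [h3]
        ring
      have hAB := hA.symm.trans hB
      have hn0 : (n : ℝ) ≠ 0 := by exact_mod_cast (by omega : n ≠ 0)
      have hpow : ((-1 : ℝ)) ^ j ≠ 0 := by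
        apply pow_ne_zero; norm_num
      have h5 : (n : ℝ) * Q.roots.esymm j = ((n : ℝ) - (j : ℝ)) * s.esymm j :=
        mul_left_cancel₀ hpow (by linear_combination hAB)
      field_simp
      linear_combination h5
    have hCn : (0 : ℝ) < (n.choose j : ℝ) := by exact_mod_cast Nat.choose_pos (by omega : j ≤ n)
    have hCn1 : (0 : ℝ) < ((n-1).choose j : ℝ) := by exact_mod_cast Nat.choose_pos hj
    have hid : (n : ℝ) * ((n-1).choose j) = (n.choose j) * ((n : ℝ) - (j : ℝ)) := by
      have h1 : (n-1).succ * (n-1).choose j = (n-1).succ.choose (j+1) * (j+1) :=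
        Nat.add_one_mul_choose_eq (n-1) j
      have hsucc : (n-1).succ = n := by omega
      rw [hsucc] at h1
      have h2 : n.choose (j+1) * (j+1) = n.choose j * (n - j) := Nat.choose_succ_right_eq n j
      have h3 := h1.trans h2
      have h4 := congrArg (fun m : ℕ => (m : ℝ)) h3
      push_cast [Nat.cast_sub (by omega : j ≤ n)] at h4
      linarith
    rw [E, E, hcard, hesymm, ← hns]
    rw [div_eq_div_iff (by positivity) (by positivity)]
    have hn0 : (n : ℝ) ≠ 0 := by exact_mod_cast (show n ≠ 0 by omega)
    field_simp
    linear_combination (-(s.esymm j)) * hid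


lemma top_indexed (n : ℕ) (hn : 2 ≤ n) (x : Fin n → ℝ) (hx : ∀ i, 0 < x i) :
    E (Finset.univ.val.map x) n ^ ((1 : ℝ)/n) ≤
      E (Finset.univ.val.map x) (n-1) ^ ((1 : ℝ)/((n : ℝ)-1)) := by
  have hcards : Multiset.card (Finset.univ.val.map x) = n := by simp
  set P : ℝ := ∏ i, x i with hPdef
  have hP : 0 < P := Finset.prod_pos fun i _ => hx i
  have hnn : (0:ℝ) < n := by positivity
  have hn1 : (0:ℝ) < (n:ℝ) - 1 := by
    have : (2:ℝ) ≤ n := by exact_mod_cast hn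
    linarith
  have hucard : (Finset.univ : Finset (Fin n)).card = n := by simp
  have hEn : E (Finset.univ.val.map x) n = P := by
    rw [E, hcards, Finset.esymm_map_val, Nat.choose_self, Nat.cast_one, div_one]
    have hps := Finset.powersetCard_self (Finset.univ : Finset (Fin n))
    rw [hucard] at hps
    rw [hps, Finset.sum_singleton]
  have herase : ∀ j : Fin n, ∏ i ∈ Finset.univ.erase j, x i = P / x j := fun j =>
    eq_div_iff (hx j).ne' |>.2 (Finset.prod_erase_mul _ _ (Finset.mem_univ j))
  have himg : (Finset.univ : Finset (Fin n)).powersetCard (n-1) =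
      Finset.univ.image (fun j : Fin n => Finset.univ.erase j) := by
    ext S
    simp only [Finset.mem_powersetCard, Finset.mem_image, Finset.mem_univ, true_and]
    constructor
    · rintro ⟨hSsub, hScard⟩
      have h1 : (Finset.univ \ S).card = 1 := by
        rw [Finset.card_sdiff_of_subset hSsub, hucard, hScard]
        omega
      obtain ⟨j, hj⟩ := Finset.card_eq_one.1 h1
      refine ⟨j, ?_⟩
      rw [Finset.erase_eq, ← hj, Finset.sdiff_sdiff_self_left, Finset.univ_inter]
    · rintro ⟨j, rfl⟩
      exact ⟨Finset.subset_univ _, by rw [Finset.card_erase_of_mem (Finset.mem_univ j), hucard]⟩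
  have hinj : ∀ a ∈ (Finset.univ : Finset (Fin n)), ∀ b ∈ Finset.univ,
      Finset.univ.erase a = Finset.univ.erase b → a = b := by
    intro a _ b _ h
    by_contra hab
    have : a ∈ Finset.univ.erase b := Finset.mem_erase.2 ⟨hab, Finset.mem_univ a⟩
    rw [← h] at this
    exact (Finset.mem_erase.1 this).1 rfl
  have hEn1 : E (Finset.univ.val.map x) (n-1) =
      (∑ j : Fin n, ∏ i ∈ Finset.univ.erase j, x i) / n := by
    rw [E, hcards, Finset.esymm_map_val, himg, Finset.sum_image hinj]
    rw [Nat.choose_symm (by omega : 1 ≤ n), Nat.choose_one_right]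
  have hz : ∀ j ∈ (Finset.univ : Finset (Fin n)), (0:ℝ) ≤ ∏ i ∈ Finset.univ.erase j, x i :=
    fun j _ => le_of_lt (Finset.prod_pos fun i _ => hx i)
  have hamgm := Real.geom_mean_le_arith_mean_weighted Finset.univ
    (fun _ => 1/(n:ℝ)) (fun j => ∏ i ∈ Finset.univ.erase j, x i)
    (fun i _ => by positivity)
    (by rw [Finset.sum_const, hucard, nsmul_eq_mul]; field_simp)
    hz
  beta_reduce at hamgm
  rw [Real.finset_prod_rpow _ _ hz] at hamgm
  have hprod : ∏ j : Fin n, ∏ i ∈ Finset.univ.erase j, x i = P ^ (n-1) := by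
    rw [Finset.prod_congr rfl fun j _ => herase j, Finset.prod_div_distrib,
      Finset.prod_const, hucard, ← hPdef, pow_sub₀ P hP.ne' (by omega : 1 ≤ n), pow_one,
      div_eq_mul_inv]
  have hsum : ∑ j : Fin n, (1/(n:ℝ)) * ∏ i ∈ Finset.univ.erase j, x i =
      (∑ j : Fin n, ∏ i ∈ Finset.univ.erase j, x i) / n := by
    rw [← Finset.mul_sum]
    ring
  rw [hprod, hsum, ← hEn1] at hamgm
  -- hamgm : (P ^ (n-1)) ^ (1/n : ℝ) ≤ E s (n-1)
  have hkey : P ^ ((1:ℝ)/n) = ((P ^ (n-1:ℕ) : ℝ) ^ ((1:ℝ)/n)) ^ ((1:ℝ)/((n:ℝ)-1)) := by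
    rw [← Real.rpow_natCast P (n-1), ← Real.rpow_mul hP.le, ← Real.rpow_mul hP.le]
    congr 1
    rw [Nat.cast_sub (by omega : 1 ≤ n), Nat.cast_one]
    field_simp
  rw [hEn, hkey]
  exact Real.rpow_le_rpow (by positivity) hamgm (by positivity)


lemma main : ∀ (n : ℕ) (s : Multiset ℝ), Multiset.card s = n → (∀ y ∈ s, 0 < y) →
    ∀ k, 1 ≤ k → k < n →
      E s (k+1) ^ ((1:ℝ)/((k:ℝ)+1)) ≤ E s k ^ ((1:ℝ)/(k:ℝ)) := by
  intro n
  induction n using Nat.strong_induction_on with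
  | _ n ih =>
    intro s hcard hpos k hk1 hkn
    rcases eq_or_lt_of_le (Nat.succ_le_of_lt hkn) with heq | hlt
    · -- top case : k + 1 = n
      subst heq
      obtain ⟨m, x, hxs, hm⟩ := exists_index s
      have hmn : m = k + 1 := by rw [hm, hcard]
      subst hmn
      have hx : ∀ i, 0 < x i := by
        intro i
        apply hpos
        rw [← hxs]
        exact Multiset.mem_map_of_mem x (by simp)
      have htop := top_indexed (k+1) (by omega) x hx
      rw [hxs] at htop
      simp only [Nat.add_sub_cancel] at htop
      push_cast at htop
      have hc : ((k:ℝ) + 1) - 1 = (k:ℝ) := by ring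
      rw [hc] at htop
      exact htop
    · -- derivative case : k + 1 < n
      obtain ⟨t, htpos, htcard, hE⟩ := deriv_step s hpos (by omega)
      rw [hcard] at htcard hE
      rw [← hE (k+1) (by omega), ← hE k (by omega)]
      exact ih (n-1) (by omega) t htcard htpos k hk1 (by omega)

lemma symMean_eq (n : ℕ) (x : Fin n → ℝ) (k : ℕ) :
    (∑ S ∈ (Finset.univ : Finset (Fin n)).powersetCard k, ∏ i ∈ S, x i) / (n.choose k : ℝ)
      = E (Finset.univ.val.map x) k := by
  rw [E, Multiset.card_map, Finset.esymm_map_val]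
  congr 2
  simp

end MaclaurinAux

/-- Maclaurin's inequality: E_k^(1/k) ≥ E_{k+1}^(1/(k+1)) for 1 ≤ k < n, and in
particular the geometric mean E_n^(1/n) ≤ E_k^(1/k) for every 1 ≤ k ≤ n. -/
theorem maclaurin_inequality (n : ℕ) (hn : 1 ≤ n) (x : Fin n → ℝ) (hx : ∀ i, 0 < x i) :
    (∀ k, 1 ≤ k → k < n →
      (symMean n x (k + 1)) ^ ((1 : ℝ) / ((k : ℝ) + 1)) ≤ (symMean n x k) ^ ((1 : ℝ) / (k : ℝ))) ∧
    (∀ k, 1 ≤ k → k ≤ n →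
      (symMean n x n) ^ ((1 : ℝ) / (n : ℝ)) ≤ (symMean n x k) ^ ((1 : ℝ) / (k : ℝ))) := by
  have hsMem : ∀ y ∈ (Finset.univ.val.map x), 0 < y := by
    intro y hy
    obtain ⟨i, _, rfl⟩ := Multiset.mem_map.1 hy
    exact hx i
  have hcard : Multiset.card (Finset.univ.val.map x) = n := by simp
  have part1 : ∀ k, 1 ≤ k → k < n →
      (symMean n x (k + 1)) ^ ((1 : ℝ) / ((k : ℝ) + 1)) ≤ (symMean n x k) ^ ((1 : ℝ) / (k : ℝ)) := by
    intro k hk1 hkn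
    simp only [symMean]
    rw [MaclaurinAux.symMean_eq, MaclaurinAux.symMean_eq]
    exact MaclaurinAux.main n _ hcard hsMem k hk1 hkn
  refine ⟨part1, ?_⟩
  have chain : ∀ d k, 1 ≤ k → k + d ≤ n →
      (symMean n x (k + d)) ^ ((1 : ℝ) / ((k + d : ℕ) : ℝ)) ≤
        (symMean n x k) ^ ((1 : ℝ) / (k : ℝ)) := by
    intro d
    induction d with
    | zero => intro k hk1 hkn; simp
    | succ d ihd =>
      intro k hk1 hkn
      have h1 := part1 (k + d) (by omega) (by omega)
      have h2 := ihd k hk1 (by omega)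
      refine le_trans ?_ h2
      push_cast at h1 ⊢
      rw [show k + (d + 1) = k + d + 1 by omega, show (k:ℝ) + ((d:ℝ) + 1) = (k:ℝ) + (d:ℝ) + 1 by ring]
      exact h1
  intro k hk1 hkn
  have h := chain (n - k) k hk1 (by omega)
  rw [show k + (n - k) = n by omega] at h
  exact h
end
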